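/- In any metabelian Novikov algebra A, the polynomial p(a,b,c) = b*(a*c) + c*(b*a) + c*(a*b) is symmetric in its three arguments: for every permutation σ of {a,b,c}, p(σ(a),σ(b),σ(c)) = p(a,b,c). -/
import Mathlib


/-- Setting: a nonassociative (nonunital) algebra over a field of characteristic 0. -/
theorem stmt_14 {K : Type*} [Field K] [CharZero K]
    {A : Type*} [NonUnitalNonAssocRing A] [Module K A]
    [SMulCommClass K A A] [IsScalarTower K A A]
    (lcom : ∀ a b c : A, a*(b*c) = b*(a*c))
    (rsym : ∀ a b c : A, (a*b)*c - a*(b*c) = (a*c)*b - a*(c*b))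
    (metab : ∀ a b c d : A, (a*b)*(c*d) = 0) :
    let p : A → A → A → A := fun a b c : A => b*(a*c) + c*(b*a) + c*(a*b)
    ∀ (x : Fin 3 → A) (σ : Equiv.Perm (Fin 3)),
      p (x (σ 0)) (x (σ 1)) (x (σ 2)) = p (x 0) (x 1) (x 2) := by
  intro p x σ
  have h1 : ∀ a b c : A, p a b c = p b a c := by
    intro a b c
    show b*(a*c) + c*(b*a) + c*(a*b) = a*(b*c) + c*(a*b) + c*(b*a)
    rw [lcom b a c]; abel
  have h2 : ∀ a b c : A, p a b c = p a c b := by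
    intro a b c
    show b*(a*c) + c*(b*a) + c*(a*b) = c*(a*b) + b*(c*a) + b*(a*c)
    rw [lcom b c a]; abel
  fin_cases σ <;>
    first
      | rfl
      | exact h1 _ _ _
      | exact h2 _ _ _
      | exact (h2 _ _ _).trans (h1 _ _ _)
      | exact (h1 _ _ _).trans (h2 _ _ _)
      | exact (h1 _ _ _).trans ((h2 _ _ _).trans (h1 _ _ _))
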